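/- Let A ∈ M_n(ℂ), λ ∈ ℂ, and let D = diag(d₁,…,d_m) be a real diagonal m×m matrix. Suppose Π : ℝ → M_{n×m}(ℂ) is differentiable and satisfies Π′(x) = −i A Π(x) D. Then P(x) := Π(x) e^{iλxD} satisfies P′(x) = −i (A − λ I_n) P(x) D. Consequently, if (A − λ I_n)ⁿ = 0, then every entry of P(x) is a polynomial in x of degree less than n. -/

import Mathlib

open Matrix Polynomial


noncomputable def antider (q : Polynomial ℂ) : Polynomial ℂ :=
  q.sum fun k a => C (a / (k + 1)) * X ^ (k + 1)

lemma antider_derivative (q : Polynomial ℂ) : (antider q).derivative = q := by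
  rw [antider, Polynomial.sum_def, derivative_sum]
  conv_rhs => rw [← q.sum_C_mul_X_pow_eq, Polynomial.sum_def]
  refine Finset.sum_congr rfl fun k hk => ?_
  rw [derivative_C_mul, derivative_X_pow]
  push_cast
  rw [← mul_assoc, ← C_mul]
  congr 2
  rw [div_mul_cancel₀ _ (Nat.cast_add_one_ne_zero k)]

lemma antider_degree (q : Polynomial ℂ) : (antider q).degree ≤ q.degree + 1 := by
  refine (Polynomial.degree_sum_le _ _).trans ?_
  refine Finset.sup_le fun k hk => ?_
  refine (degree_C_mul_X_pow_le _ _).trans ?_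
  have h1 : (k : WithBot ℕ) ≤ q.degree := le_degree_of_mem_supp k hk
  have := add_le_add_right h1 (1 : WithBot ℕ)
  simpa [add_comm] using this

lemma poly_of_deriv {f : ℝ → ℂ} {q : Polynomial ℂ} {t : ℕ}
    (hq : q.degree < (t : ℕ))
    (h : ∀ x : ℝ, HasDerivAt f (q.eval (x : ℂ)) x) :
    ∃ p : Polynomial ℂ, p.degree < ((t + 1 : ℕ) : WithBot ℕ) ∧
      ∀ x : ℝ, f x = p.eval (x : ℂ) := by
  set r := antider q with hrdef
  have hd : ∀ x : ℝ, HasDerivAt (fun y : ℝ => f y - r.eval (y : ℂ)) 0 x := by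
    intro x
    have h1 : HasDerivAt (fun y : ℝ => r.eval (y : ℂ)) (q.eval (x : ℂ)) x := by
      have := (r.hasDerivAt (x : ℂ)).comp_ofReal
      rwa [antider_derivative] at this
    exact ((h x).sub h1).congr_deriv (by simp)
  have hc : ∀ x : ℝ, f x - r.eval (x : ℂ) = f 0 - r.eval ((0 : ℝ) : ℂ) :=
    fun x => is_const_of_deriv_eq_zero (fun y => (hd y).differentiableAt)
      (fun y => (hd y).deriv) x 0
  have hrd : r.degree < ((t + 1 : ℕ) : WithBot ℕ) := by
    refine lt_of_le_of_lt (antider_degree q) ?_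
    rcases eq_or_ne q 0 with rfl | hq0
    · simp [Polynomial.degree_zero]
    · rw [Polynomial.degree_eq_natDegree hq0] at hq ⊢
      have h2 : q.natDegree < t := by exact_mod_cast hq
      have h3 : ((q.natDegree : WithBot ℕ) + 1) = ((q.natDegree + 1 : ℕ) : WithBot ℕ) := by
        push_cast; ring
      rw [h3]
      exact_mod_cast Nat.succ_lt_succ h2
  refine ⟨r + C (f 0 - r.eval ((0:ℝ):ℂ)), ?_, fun x => ?_⟩
  · refine lt_of_le_of_lt (degree_add_le _ _) (max_lt hrd ?_)
    exact lt_of_le_of_lt degree_C_le (by exact_mod_cast WithBot.coe_lt_coe.mpr (Nat.succ_pos t))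
  · rw [eval_add, eval_C, ← hc x]; ring

lemma deriv_entry {n m : ℕ} (M : Matrix (Fin n) (Fin n) ℂ) (v : Fin m → ℂ)
    {P : ℝ → Matrix (Fin n) (Fin m) ℂ} {Q : Matrix (Fin n) (Fin m) ℂ} {x : ℝ}
    (h : ∀ i j, HasDerivAt (fun y => P y i j) (Q i j) x) (i : Fin n) (j : Fin m) :
    HasDerivAt (fun y => (M * P y * Matrix.diagonal v) i j)
      ((M * Q * Matrix.diagonal v) i j) x := by
  simp only [Matrix.mul_diagonal]
  simp only [Matrix.mul_apply]
  exact (HasDerivAt.fun_sum fun a _ => (h a j).const_mul (M i a)).mul_const (v j)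

/-- If `Π′ = −iAΠD`, then `P(x) = Π(x)e^{iλxD}` satisfies `P′ = −i(A−λI)PD`;
consequently, if `(A−λI)ⁿ = 0`, every entry of `P(x)` is a polynomial in `x` of degree
less than `n`. -/
theorem stmt_19 {n m : ℕ}
    (A : Matrix (Fin n) (Fin n) ℂ) (lam : ℂ)
    (d : Fin m → ℝ)
    (D : Matrix (Fin m) (Fin m) ℂ)
    (hD : D = Matrix.diagonal (fun k => (d k : ℂ)))
    (Pm : ℝ → Matrix (Fin n) (Fin m) ℂ)
    (hPm : ∀ x i j, HasDerivAt (fun y => Pm y i j)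
      (((-Complex.I) • (A * Pm x * D)) i j) x)
    (E : ℝ → Matrix (Fin m) (Fin m) ℂ)
    (hE : ∀ x, E x = Matrix.diagonal
      (fun k => Complex.exp (Complex.I * lam * (x : ℂ) * (d k : ℂ)))) :
    (∀ x i j, HasDerivAt (fun y => (Pm y * E y) i j)
      ((((-Complex.I) • ((A - lam • 1) * (Pm x * E x) * D) :
          Matrix (Fin n) (Fin m) ℂ)) i j) x)
    ∧ ((A - lam • 1) ^ n = 0 →
        ∀ i j, ∃ p : Polynomial ℂ, p.degree < n
          ∧ ∀ x : ℝ, (Pm x * E x) i j = p.eval (x : ℂ)) := by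
  have part1 : ∀ x i j, HasDerivAt (fun y => (Pm y * E y) i j)
      ((((-Complex.I) • ((A - lam • 1) * (Pm x * E x) * D) :
          Matrix (Fin n) (Fin m) ℂ)) i j) x := by
    intro x i j
    have hfun : (fun y => (Pm y * E y) i j)
        = fun y => Pm y i j * Complex.exp (Complex.I * lam * (y:ℂ) * (d j:ℂ)) := by
      funext y; rw [hE y, Matrix.mul_diagonal]
    have h0 : HasDerivAt (fun y : ℝ => (y:ℂ)) 1 x := by
      exact Complex.ofRealCLM.hasDerivAt (x := x)
    have h1 : HasDerivAt (fun y : ℝ => Complex.I * lam * (y:ℂ) * (d j:ℂ))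
        (Complex.I * lam * (d j:ℂ)) x := by
      have := (h0.const_mul (Complex.I * lam)).mul_const ((d j : ℂ))
      convert this using 1
      · rfl
      ring
    have hexp : HasDerivAt (fun y : ℝ => Complex.exp (Complex.I * lam * (y:ℂ) * (d j:ℂ)))
        (Complex.I * lam * (d j:ℂ) * Complex.exp (Complex.I * lam * (x:ℂ) * (d j:ℂ))) x := by
      have := h1.cexp
      convert this using 1
      ring
    rw [hfun]
    have hprod := (hPm x i j).mul hexp
    convert hprod using 1
    · rfl
    · rfl
    rw [hE, hD]
    simp only [← Matrix.mul_assoc, Matrix.sub_mul, Matrix.smul_mul, Matrix.one_mul,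
      Matrix.mul_diagonal, Matrix.smul_apply, Matrix.sub_apply, smul_eq_mul]
    ring
  refine ⟨part1, fun hnil i j => ?_⟩
  set N := A - lam • 1 with hN
  set P : ℝ → Matrix (Fin n) (Fin m) ℂ := fun x => Pm x * E x with hPdef
  have hDk : ∀ k : ℕ, D ^ k = Matrix.diagonal (fun a => ((d a : ℂ)) ^ k) := by
    intro k
    rw [hD, Matrix.diagonal_pow]
    rfl
  have key : ∀ t : ℕ, ∀ k : ℕ, n ≤ k + t → ∀ (i : Fin n) (j : Fin m),
      ∃ p : Polynomial ℂ, p.degree < (t : ℕ) ∧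
        ∀ x : ℝ, (N ^ k * P x * D ^ k) i j = p.eval (x : ℂ) := by
    intro t
    induction t with
    | zero =>
      intro k hk i j
      refine ⟨0, by simp [Polynomial.degree_zero], fun x => ?_⟩
      rw [pow_eq_zero_of_le (by omega : n ≤ k) hnil]
      simp
    | succ t ih =>
      intro k hk i j
      obtain ⟨q0, hq0deg, hq0⟩ := ih (k + 1) (by omega) i j
      set q : Polynomial ℂ := (-Complex.I) • q0 with hqdef
      have hqdeg : q.degree < (t : ℕ) :=
        lt_of_le_of_lt (Polynomial.degree_smul_le _ _) hq0deg
      have hder : ∀ x : ℝ, HasDerivAt (fun y => (N ^ k * P y * D ^ k) i j)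
          (q.eval (x : ℂ)) x := by
        intro x
        have hd0 := deriv_entry (N ^ k) (fun a => ((d a : ℂ)) ^ k)
          (P := P) (Q := (-Complex.I) • (N * P x * D)) (x := x) (part1 x) i j
        rw [← hDk] at hd0
        have hmat : N ^ k * ((-Complex.I) • (N * P x * D)) * D ^ k
            = (-Complex.I) • (N ^ (k + 1) * P x * D ^ (k + 1)) := by
          rw [Matrix.mul_smul, Matrix.smul_mul]
          congr 1
          rw [pow_succ, pow_succ']
          simp only [Matrix.mul_assoc]
        rw [hmat] at hd0
        have hval : ((-Complex.I) • (N ^ (k + 1) * P x * D ^ (k + 1))) i j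
            = q.eval (x : ℂ) := by
          rw [Matrix.smul_apply, smul_eq_mul, hq0 x, hqdef]
          simp
        rwa [hval] at hd0
      obtain ⟨p, hpd, hpv⟩ := poly_of_deriv hqdeg hder
      exact ⟨p, by exact_mod_cast hpd, hpv⟩
  obtain ⟨p, hpd, hpv⟩ := key n 0 (by omega) i j
  refine ⟨p, hpd, fun x => ?_⟩
  have := hpv x
  simpa using this
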